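/- arXiv:1706.01778 — 4 statements merged into one kernel-verified Lean document; each statement's English description precedes it below -/
import Mathlib

section
/- Under complete randomization of n units with n_1 treated and n_0 = n − n_1 control (1 ≤ n_1 ≤ n−1), the variance of the difference-in-means estimator θ̂ = (1/n_1)Σ X_i Y_i(1) − (1/n_0)Σ (1−X_i) Y_i(0) equals S_1²/n_1 + S_0²/n_0 − S_θ²/n, where S_1², S_0², S_θ² are the finite-population variances (with divisor n−1) of Y_i(1), Y_i(0), and θ_i = Y_i(1) − Y_i(0), respectively. -/
open Finset

lemma cnt_in {n n₁ : ℕ} (h1 : 1 ≤ n₁) (i : Fin n) :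
    (((univ : Finset (Fin n)).powersetCard n₁).filter (fun S => i ∈ S)).card
      = (n-1).choose (n₁-1) := by
  have : (((univ : Finset (Fin n)).powersetCard n₁).filter (fun S => i ∈ S)).card
      = ((univ.erase i).powersetCard (n₁-1)).card := by
    apply Finset.card_bij' (fun S _ => S.erase i) (fun T _ => insert i T)
    · intro S hS
      simp only [mem_filter] at hS
      exact Finset.insert_erase hS.2
    · intro T hT
      simp only [Finset.mem_powersetCard] at hT
      have hi : i ∉ T := fun h => (Finset.mem_erase.mp (hT.1 h)).1 rfl
      exact Finset.erase_insert hi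
    · intro S hS
      simp only [mem_filter, Finset.mem_powersetCard_univ] at hS
      simp only [Finset.mem_powersetCard]
      refine ⟨fun x hx => ?_, ?_⟩
      · simp only [Finset.mem_erase] at hx ⊢
        exact ⟨hx.1, mem_univ x⟩
      · rw [Finset.card_erase_of_mem hS.2, hS.1]
    · intro T hT
      simp only [Finset.mem_powersetCard] at hT
      have hi : i ∉ T := fun h => (Finset.mem_erase.mp (hT.1 h)).1 rfl
      simp only [mem_filter, Finset.mem_powersetCard_univ]
      constructor
      · rw [Finset.card_insert_of_notMem hi, hT.2]
        omega
      · exact Finset.mem_insert_self i T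
  rw [this, Finset.card_powersetCard, Finset.card_erase_of_mem (mem_univ i),
    Finset.card_univ, Fintype.card_fin]

lemma cnt_inin {n n₁ : ℕ} (h1 : 2 ≤ n₁) {i j : Fin n} (hij : i ≠ j) :
    (((univ : Finset (Fin n)).powersetCard n₁).filter (fun S => i ∈ S ∧ j ∈ S)).card
      = (n-2).choose (n₁-2) := by
  have : (((univ : Finset (Fin n)).powersetCard n₁).filter (fun S => i ∈ S ∧ j ∈ S)).card
      = (((univ.erase i).erase j).powersetCard (n₁-2)).card := by
    apply Finset.card_bij' (fun S _ => (S.erase i).erase j) (fun T _ => insert i (insert j T))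
    · intro S hS
      simp only [mem_filter] at hS
      ext x
      simp only [Finset.mem_insert, Finset.mem_erase]
      constructor
      · rintro (rfl | rfl | ⟨-, -, h⟩)
        exacts [hS.2.1, hS.2.2, h]
      · intro hx
        by_cases hx1 : x = i
        · tauto
        · by_cases hx2 : x = j <;> tauto
    · intro T hT
      simp only [Finset.mem_powersetCard] at hT
      have hjT : j ∉ T := by intro h; have := hT.1 h; simp at this
      have hiT : i ∉ T := by intro h; have := hT.1 h; simp at this
      ext x
      simp only [Finset.mem_insert, Finset.mem_erase]
      constructor
      · rintro ⟨hxj, hxi, (rfl | rfl | h)⟩ <;> tauto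
      · intro hx
        exact ⟨fun h => hjT (h ▸ hx), fun h => hiT (h ▸ hx), Or.inr (Or.inr hx)⟩
    · intro S hS
      simp only [mem_filter, Finset.mem_powersetCard_univ] at hS
      simp only [Finset.mem_powersetCard]
      refine ⟨fun x hx => ?_, ?_⟩
      · simp only [Finset.mem_erase] at hx ⊢
        exact ⟨hx.1, hx.2.1, mem_univ x⟩
      · rw [Finset.card_erase_of_mem (Finset.mem_erase.mpr ⟨hij.symm, hS.2.2⟩),
          Finset.card_erase_of_mem hS.2.1, hS.1]
        omega
    · intro T hT
      simp only [Finset.mem_powersetCard] at hT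
      have hjT : j ∉ T := by intro h; have := hT.1 h; simp at this
      have hiT : i ∉ T := by intro h; have := hT.1 h; simp at this
      simp only [mem_filter, Finset.mem_powersetCard_univ]
      refine ⟨?_, Finset.mem_insert_self i _,
        Finset.mem_insert_of_mem (Finset.mem_insert_self j T)⟩
      rw [Finset.card_insert_of_notMem (by simp [hiT, hij]),
        Finset.card_insert_of_notMem hjT, hT.2]
      omega
  rw [this, Finset.card_powersetCard, Finset.card_erase_of_mem
    (Finset.mem_erase.mpr ⟨hij.symm, mem_univ j⟩),
    Finset.card_erase_of_mem (mem_univ i), Finset.card_univ, Fintype.card_fin]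
  congr 1

lemma sumA_linear {n : ℕ} (A : Finset (Finset (Fin n))) (f : Fin n → ℝ) :
    ∑ S ∈ A, ∑ i ∈ S, f i
      = ∑ i, f i * ((A.filter (fun S => i ∈ S)).card : ℝ) := by
  have h1 : ∀ S ∈ A, ∑ i ∈ S, f i = ∑ i, if i ∈ S then f i else 0 := by
    intro S _
    rw [← Finset.sum_filter, Finset.filter_mem_eq_inter, Finset.univ_inter]
  rw [Finset.sum_congr rfl h1, Finset.sum_comm]
  refine Finset.sum_congr rfl fun i _ => ?_
  rw [← Finset.sum_filter, Finset.sum_const, nsmul_eq_mul, mul_comm]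

lemma sumA_quad {n : ℕ} (A : Finset (Finset (Fin n))) (f : Fin n → ℝ) :
    ∑ S ∈ A, (∑ i ∈ S, f i) ^ 2
      = ∑ i, ∑ j, f i * f j * ((A.filter (fun S => i ∈ S ∧ j ∈ S)).card : ℝ) := by
  have ext0 : ∀ (S : Finset (Fin n)) (h : Fin n → ℝ),
      ∑ i ∈ S, h i = ∑ i, if i ∈ S then h i else 0 := by
    intro S h
    rw [← Finset.sum_filter, Finset.filter_mem_eq_inter, Finset.univ_inter]
  have h1 : ∀ S ∈ A, (∑ i ∈ S, f i) ^ 2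
      = ∑ i, ∑ j, if i ∈ S ∧ j ∈ S then f i * f j else 0 := by
    intro S _
    rw [sq, Finset.sum_mul_sum, ext0 S (fun i => ∑ j ∈ S, f i * f j)]
    refine Finset.sum_congr rfl fun i _ => ?_
    by_cases hiS : i ∈ S
    · simp only [hiS, if_true, true_and]
      exact ext0 S _
    · simp [hiS]
  rw [Finset.sum_congr rfl h1, Finset.sum_comm]
  refine Finset.sum_congr rfl fun i _ => ?_
  rw [Finset.sum_comm]
  refine Finset.sum_congr rfl fun j _ => ?_
  rw [← Finset.sum_filter, Finset.sum_const, nsmul_eq_mul, mul_comm]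

lemma sum_centered_sq {n : ℕ} (hn : (n:ℝ) ≠ 0) (f : Fin n → ℝ) :
    ∑ i, (f i - (∑ j, f j)/(n:ℝ))^2 = ∑ i, f i^2 - (∑ i, f i)^2/(n:ℝ) := by
  have h : ∀ i : Fin n, (f i - (∑ j, f j)/(n:ℝ))^2
      = f i^2 - f i * (2*(∑ j, f j)/(n:ℝ)) + ((∑ j, f j)/(n:ℝ))^2 := fun i => by ring
  rw [Finset.sum_congr rfl fun i _ => h i, Finset.sum_add_distrib,
    Finset.sum_sub_distrib, ← Finset.sum_mul, Finset.sum_const,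
    Finset.card_univ, Fintype.card_fin, nsmul_eq_mul]
  field_simp
  ring

lemma nat_choose1 {n n₁ : ℕ} (h1 : 1 ≤ n₁) (h2 : n₁ ≤ n) :
    (n-1).choose (n₁-1) * n = n.choose n₁ * n₁ := by
  obtain ⟨m, rfl⟩ : ∃ m, n = m + 1 := ⟨n-1, by omega⟩
  obtain ⟨t, rfl⟩ : ∃ t, n₁ = t + 1 := ⟨n₁-1, by omega⟩
  simp only [Nat.add_sub_cancel]
  rw [mul_comm]
  exact Nat.add_one_mul_choose_eq m t

lemma nat_choose2 {n n₁ : ℕ} (h1 : 2 ≤ n₁) (h2 : n₁ ≤ n) :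
    (n-2).choose (n₁-2) * (n * (n-1)) = n.choose n₁ * (n₁ * (n₁-1)) := by
  obtain ⟨m, rfl⟩ : ∃ m, n = m + 2 := ⟨n-2, by omega⟩
  obtain ⟨t, rfl⟩ : ∃ t, n₁ = t + 2 := ⟨n₁-2, by omega⟩
  simp only [Nat.add_sub_cancel]
  have ha := Nat.add_one_mul_choose_eq m t
  have hb := Nat.add_one_mul_choose_eq (m+1) (t+1)
  calc m.choose t * ((m+2) * (m+2-1))
      = (m+2) * (Nat.succ m * m.choose t) := by simp [Nat.succ_eq_add_one]; ring
    _ = (m+2) * ((m+1).choose (t+1) * (t+1)) := by rw [ha]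
    _ = (Nat.succ (m+1) * (m+1).choose (t+1)) * (t+1) := by simp [Nat.succ_eq_add_one]; ring
    _ = ((m+2).choose (t+2) * (t+2)) * (t+1) := by rw [hb]
    _ = (m+2).choose (t+2) * ((t+2) * (t+2-1)) := by simp; ring

set_option maxHeartbeats 2000000 in
/-- Neyman's variance formula for the difference-in-means estimator under
complete randomization. -/
theorem stmt1 (n n₁ : ℕ) (h1 : 1 ≤ n₁) (h2 : n₁ ≤ n - 1)
    (Y1 Y0 : Fin n → ℝ) :
    let n₀ : ℕ := n - n₁
    let θhat : Finset (Fin n) → ℝ :=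
      fun S => (∑ i ∈ S, Y1 i) / (n₁ : ℝ) - (∑ i ∈ Sᶜ, Y0 i) / (n₀ : ℝ)
    let A := (univ : Finset (Fin n)).powersetCard n₁
    let Ybar1 := (∑ i, Y1 i) / (n : ℝ)
    let Ybar0 := (∑ i, Y0 i) / (n : ℝ)
    let θbar := (∑ i, (Y1 i - Y0 i)) / (n : ℝ)
    let S1sq := (∑ i, (Y1 i - Ybar1) ^ 2) / ((n : ℝ) - 1)
    let S0sq := (∑ i, (Y0 i - Ybar0) ^ 2) / ((n : ℝ) - 1)
    let Sθsq := (∑ i, ((Y1 i - Y0 i) - θbar) ^ 2) / ((n : ℝ) - 1)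
    (∑ S ∈ A, (θhat S) ^ 2) / (A.card : ℝ)
      - ((∑ S ∈ A, θhat S) / (A.card : ℝ)) ^ 2
    = S1sq / (n₁ : ℝ) + S0sq / (n₀ : ℝ) - Sθsq / (n : ℝ) := by
  intro n₀ θhat A Ybar1 Ybar0 θbar S1sq S0sq Sθsq
  -- basic numeric facts
  have hn2 : 2 ≤ n := by omega
  have hn1n : n₁ ≤ n := by omega
  have hnR : (0:ℝ) < (n:ℝ) := by exact_mod_cast Nat.lt_of_lt_of_le (by norm_num) hn2
  have hnR' : (n:ℝ) ≠ 0 := ne_of_gt hnR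
  have hn1R : (n:ℝ) - 1 ≠ 0 := by
    have : (2:ℝ) ≤ (n:ℝ) := by exact_mod_cast hn2
    linarith
  have hkR : (0:ℝ) < (n₁:ℝ) := by exact_mod_cast h1
  have hkR' : (n₁:ℝ) ≠ 0 := ne_of_gt hkR
  have hn₀1 : 1 ≤ n₀ := by omega
  have hlR : (0:ℝ) < (n₀:ℝ) := by exact_mod_cast hn₀1
  have hlR' : (n₀:ℝ) ≠ 0 := ne_of_gt hlR
  have hlcast : (n₀:ℝ) = (n:ℝ) - (n₁:ℝ) := by
    have : (n₀:ℕ) = n - n₁ := rfl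
    rw [this, Nat.cast_sub hn1n]
  have hCpos : 0 < n.choose n₁ := Nat.choose_pos hn1n
  have hCR : (0:ℝ) < ((n.choose n₁ : ℕ) : ℝ) := by exact_mod_cast hCpos
  have hCR' : ((n.choose n₁ : ℕ) : ℝ) ≠ 0 := ne_of_gt hCR
  have hAcard : (A.card : ℝ) = ((n.choose n₁ : ℕ) : ℝ) := by
    have : A.card = n.choose n₁ := by
      rw [show A = (univ : Finset (Fin n)).powersetCard n₁ from rfl,
        Finset.card_powersetCard, Finset.card_univ, Fintype.card_fin]
    exact_mod_cast this
  set C : ℝ := ((n.choose n₁ : ℕ) : ℝ) with hC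
  set k : ℝ := (n₁ : ℝ) with hkdef
  set l : ℝ := (n₀ : ℝ) with hldef
  -- the counts, in real form
  have c_in : ∀ i : Fin n, ((A.filter (fun S => i ∈ S)).card : ℝ) = C * k / n := by
    intro i
    have hnat := nat_choose1 h1 hn1n
    have := cnt_in (n := n) h1 i
    rw [show (A.filter (fun S => i ∈ S)) =
      (((univ : Finset (Fin n)).powersetCard n₁).filter (fun S => i ∈ S)) from rfl, this]
    rw [eq_div_iff hnR']
    have : (((n-1).choose (n₁-1) : ℕ) : ℝ) * (n:ℝ) = (((n-1).choose (n₁-1) * n : ℕ) : ℝ) := by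
      push_cast; ring
    rw [this, hnat]
    push_cast
    ring
  have c_pair : ∀ i j : Fin n, ((A.filter (fun S => i ∈ S ∧ j ∈ S)).card : ℝ)
      = if i = j then C * k / n else C * (k * (k-1)) / ((n:ℝ) * ((n:ℝ)-1)) := by
    intro i j
    by_cases h : i = j
    · subst h
      rw [if_pos rfl, ← c_in i]
      congr 2
      simp
    · rw [if_neg h]
      by_cases h2' : 2 ≤ n₁
      · have hnat := nat_choose2 h2' hn1n
        rw [show (A.filter (fun S => i ∈ S ∧ j ∈ S)) =
          (((univ : Finset (Fin n)).powersetCard n₁).filter (fun S => i ∈ S ∧ j ∈ S)) from rfl,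
          cnt_inin h2' h]
        rw [eq_div_iff (by positivity)]
        have hcast : (((n-2).choose (n₁-2) : ℕ) : ℝ) * ((n:ℝ) * ((n:ℝ)-1))
            = (((n-2).choose (n₁-2) * (n * (n-1)) : ℕ) : ℝ) := by
          push_cast [Nat.cast_sub (by omega : 1 ≤ n)]
          ring
        rw [hcast, hnat]
        push_cast [Nat.cast_sub (by omega : 1 ≤ n₁)]
        ring
      · have hk1 : n₁ = 1 := by omega
        have hempty : A.filter (fun S => i ∈ S ∧ j ∈ S) = ∅ := by
          rw [Finset.filter_eq_empty_iff]
          rintro S hS ⟨hi, hj⟩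
          rw [show A = (univ : Finset (Fin n)).powersetCard n₁ from rfl,
            Finset.mem_powersetCard_univ] at hS
          have hsub : ({i, j} : Finset (Fin n)) ⊆ S := by
            intro x hx
            simp only [Finset.mem_insert, Finset.mem_singleton] at hx
            rcases hx with rfl | rfl <;> assumption
          have hle := Finset.card_le_card hsub
          rw [Finset.card_insert_of_notMem (by simp [h]), Finset.card_singleton, hS] at hle
          omega
        rw [hempty]
        simp only [Finset.card_empty, Nat.cast_zero]
        rw [hkdef, hk1]
        norm_num
  -- reduction to sums over S of g
  set g : Fin n → ℝ := fun i => Y1 i / k + Y0 i / l with hgdef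
  set b : ℝ := ∑ i, Y0 i with hbdef
  have hθ : ∀ S ∈ A, θhat S = (∑ i ∈ S, g i) - b / l := by
    intro S _
    show (∑ i ∈ S, Y1 i) / k - (∑ i ∈ Sᶜ, Y0 i) / l = _
    have hc : ∑ i ∈ Sᶜ, Y0 i = b - ∑ i ∈ S, Y0 i := by
      have := Finset.sum_add_sum_compl S Y0
      rw [hbdef]; linarith
    rw [hc]
    have : ∑ i ∈ S, g i = (∑ i ∈ S, Y1 i) / k + (∑ i ∈ S, Y0 i) / l := by
      rw [hgdef]
      rw [Finset.sum_add_distrib, ← Finset.sum_div, ← Finset.sum_div]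
    rw [this]
    ring
  set G : ℝ := ∑ i, g i with hGdef
  set P : ℝ := ∑ i, g i ^ 2 with hPdef
  have hT1 : ∑ S ∈ A, ∑ i ∈ S, g i = C * k / n * G := by
    rw [sumA_linear]
    simp only [c_in]
    rw [hGdef, ← Finset.sum_mul]
    ring
  have hT2 : ∑ S ∈ A, (∑ i ∈ S, g i) ^ 2
      = C * (k * (k-1)) / ((n:ℝ) * ((n:ℝ)-1)) * (G^2 - P)
        + C * k / n * P := by
    rw [sumA_quad]
    simp only [c_pair]
    have step : ∀ i : Fin n, ∑ j, g i * g j *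
        (if i = j then C * k / n else C * (k * (k-1)) / ((n:ℝ) * ((n:ℝ)-1)))
        = g i * G * (C * (k * (k-1)) / ((n:ℝ) * ((n:ℝ)-1)))
          + g i ^ 2 * (C * k / n - C * (k * (k-1)) / ((n:ℝ) * ((n:ℝ)-1))) := by
      intro i
      have hterm : ∀ j : Fin n, g i * g j *
          (if i = j then C * k / n else C * (k * (k-1)) / ((n:ℝ) * ((n:ℝ)-1)))
          = g i * g j * (C * (k * (k-1)) / ((n:ℝ) * ((n:ℝ)-1)))
            + (if i = j then g i * g j * (C * k / n - C * (k * (k-1)) / ((n:ℝ) * ((n:ℝ)-1))) else 0) := by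
        intro j
        by_cases hij : i = j
        · simp only [hij, if_true]; ring
        · simp only [hij, if_false]; ring
      rw [Finset.sum_congr rfl fun j _ => hterm j, Finset.sum_add_distrib]
      rw [Finset.sum_ite_eq univ i
        (fun j => g i * g j * (C * k / n - C * (k * (k-1)) / ((n:ℝ) * ((n:ℝ)-1))))]
      simp only [Finset.mem_univ, if_true]
      rw [← Finset.sum_mul, ← Finset.mul_sum, ← hGdef]
      ring
    rw [Finset.sum_congr rfl fun i _ => step i, Finset.sum_add_distrib]
    have hgg : ∑ i, g i * G = G * G := by rw [← Finset.sum_mul, ← hGdef]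
    have hA1 : ∑ i, g i * G * (C * (k * (k-1)) / ((n:ℝ) * ((n:ℝ)-1)))
        = G * G * (C * (k * (k-1)) / ((n:ℝ) * ((n:ℝ)-1))) := by
      rw [← Finset.sum_mul, hgg]
    have hA2 : ∑ i, g i ^ 2 * (C * k / n - C * (k * (k-1)) / ((n:ℝ) * ((n:ℝ)-1)))
        = P * (C * k / n - C * (k * (k-1)) / ((n:ℝ) * ((n:ℝ)-1))) := by
      rw [← Finset.sum_mul, ← hPdef]
    rw [hA1, hA2]
    ring
  have hsum1 : ∑ S ∈ A, θhat S = C * k / n * G - C * (b / l) := by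
    rw [Finset.sum_congr rfl hθ, Finset.sum_sub_distrib, hT1, Finset.sum_const,
      nsmul_eq_mul, hAcard]
  have hsum2 : ∑ S ∈ A, θhat S ^ 2
      = (C * (k * (k-1)) / ((n:ℝ) * ((n:ℝ)-1)) * (G^2 - P) + C * k / n * P)
        - 2 * (b / l) * (C * k / n * G) + C * (b / l) ^ 2 := by
    have hexp : ∀ S ∈ A, θhat S ^ 2
        = ((∑ i ∈ S, g i) ^ 2 - 2 * (b / l) * (∑ i ∈ S, g i)) + (b / l) ^ 2 := by
      intro S hS; rw [hθ S hS]; ring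
    rw [Finset.sum_congr rfl hexp, Finset.sum_add_distrib, Finset.sum_sub_distrib,
      hT2, ← Finset.mul_sum, hT1, Finset.sum_const, nsmul_eq_mul, hAcard]
  -- unfold the RHS quantities
  have e1 : ∑ i, (Y1 i - Ybar1) ^ 2 = ∑ i, Y1 i ^ 2 - (∑ i, Y1 i) ^ 2 / n :=
    sum_centered_sq hnR' Y1
  have e0 : ∑ i, (Y0 i - Ybar0) ^ 2 = ∑ i, Y0 i ^ 2 - (∑ i, Y0 i) ^ 2 / n :=
    sum_centered_sq hnR' Y0
  have eθ : ∑ i, ((Y1 i - Y0 i) - θbar) ^ 2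
      = ∑ i, (Y1 i - Y0 i) ^ 2 - (∑ i, (Y1 i - Y0 i)) ^ 2 / n :=
    sum_centered_sq hnR' (fun i => Y1 i - Y0 i)
  have s1 : ∑ i, (Y1 i - Y0 i) = (∑ i, Y1 i) - b := Finset.sum_sub_distrib _ _
  have s2 : ∑ i, (Y1 i - Y0 i) ^ 2
      = (∑ i, Y1 i ^ 2 - 2 * (∑ i, Y1 i * Y0 i)) + ∑ i, Y0 i ^ 2 := by
    have hx : ∀ i : Fin n, (Y1 i - Y0 i) ^ 2
        = (Y1 i ^ 2 - 2 * (Y1 i * Y0 i)) + Y0 i ^ 2 := fun i => by ring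
    rw [Finset.sum_congr rfl fun i _ => hx i, Finset.sum_add_distrib,
      Finset.sum_sub_distrib, ← Finset.mul_sum]
  have hGval : G = (∑ i, Y1 i) / k + b / l := by
    rw [hGdef, hbdef]
    simp only [hgdef]
    rw [Finset.sum_add_distrib, ← Finset.sum_div, ← Finset.sum_div]
  have hPval : P = (∑ i, Y1 i ^ 2) * (1/k^2)
      + ((∑ i, Y1 i * Y0 i) * (2/(k*l)) + (∑ i, Y0 i ^ 2) * (1/l^2)) := by
    rw [hPdef]
    simp only [hgdef]
    have hx : ∀ i : Fin n, (Y1 i / k + Y0 i / l) ^ 2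
        = Y1 i ^ 2 * (1/k^2) + ((Y1 i * Y0 i) * (2/(k*l)) + Y0 i ^ 2 * (1/l^2)) :=
      fun i => by field_simp; ring
    rw [Finset.sum_congr rfl fun i _ => hx i, Finset.sum_add_distrib,
      Finset.sum_add_distrib, ← Finset.sum_mul, ← Finset.sum_mul, ← Finset.sum_mul]
  have hS1 : S1sq = (∑ i, (Y1 i - Ybar1) ^ 2) / ((n : ℝ) - 1) := rfl
  have hS0 : S0sq = (∑ i, (Y0 i - Ybar0) ^ 2) / ((n : ℝ) - 1) := rfl
  have hSθ : Sθsq = (∑ i, ((Y1 i - Y0 i) - θbar) ^ 2) / ((n : ℝ) - 1) := rfl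
  have hnk : (n:ℝ) - k ≠ 0 := by rw [← hlcast]; exact hlR'
  rw [hsum1, hsum2, hAcard, hS1, hS0, hSθ, e1, e0, eθ, s1, s2, hGval, hPval, hlcast]
  field_simp
  ring
end

section
/- Under complete randomization, the expected value of the sample variance of the treated outcomes, Ŝ_1² = (1/(n_1−1)) Σ X_i (Y_i(1) − (1/n_1)Σ_j X_j Y_j(1))², equals the population variance S_1² = (1/(n−1)) Σ_i (Y_i(1) − Ȳ(1))², where n_1 ≥ 2. -/
open Finset

/-- Counting lemma: number of `k`-subsets of `s` containing two fixed distinct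
elements `i, j ∈ s` equals `(s.card - 2).choose (k - 2)`. -/
lemma count_contain {α : Type*} [DecidableEq α] (s : Finset α) (k : ℕ) (hk : 2 ≤ k)
    (i j : α) (hi : i ∈ s) (hj : j ∈ s) (hij : i ≠ j) :
    ((s.powersetCard k).filter (fun S => i ∈ S ∧ j ∈ S)).card
      = (s.card - 2).choose (k - 2) := by
  have hjs : j ∈ s.erase i := mem_erase.2 ⟨hij.symm, hj⟩
  have hcard : ((s.erase i).erase j).card = s.card - 2 := by
    rw [card_erase_of_mem hjs, card_erase_of_mem hi]
    omega
  rw [← hcard, ← card_powersetCard]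
  refine card_nbij' (fun S => (S.erase i).erase j)
    (fun T => insert i (insert j T)) ?_ ?_ ?_ ?_
  · intro S hS
    simp only [mem_coe, mem_filter, mem_powersetCard] at hS
    obtain ⟨⟨hsub, hScard⟩, hiS, hjS⟩ := hS
    have hjSi : j ∈ S.erase i := mem_erase.2 ⟨hij.symm, hjS⟩
    refine mem_powersetCard.2 ⟨?_, ?_⟩
    · exact erase_subset_erase _ (erase_subset_erase _ hsub)
    · rw [card_erase_of_mem hjSi, card_erase_of_mem hiS, hScard]
      omega
  · intro T hT
    obtain ⟨hsub, hTcard⟩ := mem_powersetCard.1 hT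
    have hiT : i ∉ T := fun h => (mem_erase.1 ((erase_subset _ _) (hsub h))).1 rfl
    have hjT : j ∉ T := fun h => (mem_erase.1 (hsub h)).1 rfl
    have hijT : i ∉ insert j T := by
      simp only [mem_insert]; push_neg; exact ⟨hij, hiT⟩
    refine mem_filter.2 ⟨mem_powersetCard.2 ⟨?_, ?_⟩, ?_, ?_⟩
    · intro x hx
      rcases mem_insert.1 hx with rfl | hx
      · exact hi
      rcases mem_insert.1 hx with rfl | hx
      · exact hj
      · exact (erase_subset _ _) ((erase_subset _ _) (hsub hx))
    · rw [card_insert_of_notMem hijT, card_insert_of_notMem hjT, hTcard]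
      omega
    · exact mem_insert_self _ _
    · exact mem_insert_of_mem (mem_insert_self _ _)
  · intro S hS
    simp only [mem_coe, mem_filter, mem_powersetCard] at hS
    obtain ⟨⟨_, _⟩, hiS, hjS⟩ := hS
    have hjSi : j ∈ S.erase i := mem_erase.2 ⟨hij.symm, hjS⟩
    show insert i (insert j ((S.erase i).erase j)) = S
    rw [insert_erase hjSi, insert_erase hiS]
  · intro T hT
    obtain ⟨hsub, _⟩ := mem_powersetCard.1 hT
    have hjT : j ∉ T := fun h => (mem_erase.1 (hsub h)).1 rfl
    have hijT : i ∉ insert j T := by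
      simp only [mem_insert]; push_neg
      exact ⟨hij, fun h => (mem_erase.1 ((erase_subset _ _) (hsub h))).1 rfl⟩
    show ((insert i (insert j T)).erase i).erase j = T
    rw [erase_insert hijT, erase_insert hjT]

/-- Expansion of a sum of squared deviations. -/
lemma sum_sq_dev {α : Type*} (S : Finset α) (Y : α → ℝ) (c : ℝ) :
    ∑ i ∈ S, (Y i - c) ^ 2
      = ∑ i ∈ S, (Y i) ^ 2 - 2 * c * ∑ i ∈ S, Y i + (S.card : ℝ) * c ^ 2 := by
  have : ∀ i ∈ S, (Y i - c) ^ 2 = (Y i) ^ 2 - 2 * c * Y i + c ^ 2 := by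
    intro i _; ring
  rw [Finset.sum_congr rfl this]
  rw [Finset.sum_add_distrib, Finset.sum_sub_distrib, Finset.mul_sum, Finset.sum_const,
    nsmul_eq_mul]

/-- The sum of squared deviations from the mean, in terms of pairwise differences. -/
lemma sum_sq_dev_pair {α : Type*} (S : Finset α) (Y : α → ℝ) (m : ℕ)
    (hm : S.card = m) (hm0 : (m : ℝ) ≠ 0) :
    ∑ i ∈ S, (Y i - (∑ j ∈ S, Y j) / (m : ℝ)) ^ 2
      = (∑ i ∈ S, ∑ j ∈ S, (Y i - Y j) ^ 2) / (2 * (m : ℝ)) := by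
  set T := ∑ j ∈ S, Y j with hT
  have h1 : ∑ i ∈ S, (Y i - T / (m : ℝ)) ^ 2
      = ∑ i ∈ S, (Y i) ^ 2 - T ^ 2 / (m : ℝ) := by
    rw [sum_sq_dev, hm, ← hT]
    field_simp
    ring
  have h2 : ∑ i ∈ S, ∑ j ∈ S, (Y i - Y j) ^ 2
      = 2 * (m : ℝ) * (∑ i ∈ S, (Y i) ^ 2) - 2 * T ^ 2 := by
    have : ∀ i ∈ S, ∑ j ∈ S, (Y i - Y j) ^ 2
        = ∑ j ∈ S, (Y j) ^ 2 - 2 * Y i * T + (m : ℝ) * (Y i) ^ 2 := by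
      intro i _
      have := sum_sq_dev S (fun j => Y j) (Y i)
      calc ∑ j ∈ S, (Y i - Y j) ^ 2 = ∑ j ∈ S, (Y j - Y i) ^ 2 := by
            refine Finset.sum_congr rfl fun j _ => by ring
        _ = ∑ j ∈ S, (Y j) ^ 2 - 2 * Y i * ∑ j ∈ S, Y j + (S.card : ℝ) * (Y i) ^ 2 := this
        _ = ∑ j ∈ S, (Y j) ^ 2 - 2 * Y i * T + (m : ℝ) * (Y i) ^ 2 := by rw [hm, hT]
    rw [Finset.sum_congr rfl this, Finset.sum_add_distrib, Finset.sum_sub_distrib,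
      Finset.sum_const, ← Finset.sum_mul, ← Finset.mul_sum, ← Finset.mul_sum,
      nsmul_eq_mul, hm, ← hT]
    ring
  rw [h1, h2]
  field_simp

/-- Key combinatorial identity on binomial coefficients. -/
lemma choose_identity (n n₁ : ℕ) (h1 : 2 ≤ n₁) (h2 : n₁ ≤ n) :
    n * (n - 1) * (n - 2).choose (n₁ - 2) = n₁ * (n₁ - 1) * n.choose n₁ := by
  obtain ⟨a, rfl⟩ : ∃ a, n₁ = a + 2 := ⟨n₁ - 2, by omega⟩
  obtain ⟨b, rfl⟩ : ∃ b, n = b + 2 := ⟨n - 2, by omega⟩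
  simp only [Nat.add_sub_cancel]
  show (b + 2) * (b + 1) * Nat.choose b a = (a + 2) * (a + 1) * Nat.choose (b + 2) (a + 2)
  have e1 := Nat.add_one_mul_choose_eq (b + 1) (a + 1)
  have e2 := Nat.add_one_mul_choose_eq b a
  calc (b + 2) * (b + 1) * Nat.choose b a
      = (b + 2) * ((b + 1) * Nat.choose b a) := by ring
    _ = (b + 2) * (Nat.choose (b + 1) (a + 1) * (a + 1)) := by rw [e2]
    _ = ((b + 2) * Nat.choose (b + 1) (a + 1)) * (a + 1) := by ring
    _ = (Nat.choose (b + 2) (a + 2) * (a + 2)) * (a + 1) := by rw [e1]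
    _ = (a + 2) * (a + 1) * Nat.choose (b + 2) (a + 2) := by ring

/-- Under complete randomization, the sample variance of the treated outcomes is
unbiased for the finite-population variance of `Y(1)`. -/
theorem stmt2 (n n₁ : ℕ) (h1 : 2 ≤ n₁) (h2 : n₁ ≤ n)
    (Y1 : Fin n → ℝ) :
    let A := (univ : Finset (Fin n)).powersetCard n₁
    let S1hat : Finset (Fin n) → ℝ :=
      fun S => (∑ i ∈ S, (Y1 i - (∑ j ∈ S, Y1 j) / (n₁ : ℝ)) ^ 2) / ((n₁ : ℝ) - 1)
    let Ybar1 := (∑ i, Y1 i) / (n : ℝ)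
    let S1sq := (∑ i, (Y1 i - Ybar1) ^ 2) / ((n : ℝ) - 1)
    (∑ S ∈ A, S1hat S) / (A.card : ℝ) = S1sq := by
  intro A S1hat Ybar1 S1sq
  have hn : 2 ≤ n := le_trans h1 h2
  have hn1R : (n₁ : ℝ) ≠ 0 := by positivity
  have hn1R' : (n₁ : ℝ) - 1 ≠ 0 := by
    have : (2 : ℝ) ≤ (n₁ : ℝ) := by exact_mod_cast h1
    linarith
  have hnR : (n : ℝ) ≠ 0 := by positivity
  have hnR' : (n : ℝ) - 1 ≠ 0 := by
    have : (2 : ℝ) ≤ (n : ℝ) := by exact_mod_cast hn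
    linarith
  have hAcard : A.card = n.choose n₁ := by
    simp [A, card_powersetCard]
  have hA0 : (A.card : ℝ) ≠ 0 := by
    rw [hAcard]
    exact_mod_cast (Nat.choose_pos h2).ne'
  -- the pairwise-difference function
  set f : Fin n → Fin n → ℝ := fun i j => (Y1 i - Y1 j) ^ 2 with hf
  -- Step 1: rewrite each S1hat S in terms of pairwise differences
  have step1 : ∀ S ∈ A, S1hat S
      = (∑ i ∈ S, ∑ j ∈ S, f i j) / (2 * (n₁ : ℝ) * ((n₁ : ℝ) - 1)) := by
    intro S hS
    have hScard : S.card = n₁ := (mem_powersetCard.1 hS).2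
    simp only [S1hat]
    rw [sum_sq_dev_pair S Y1 n₁ hScard hn1R]
    rw [div_div]
  -- Step 2: sum over A, swap sums
  have step2 : ∑ S ∈ A, (∑ i ∈ S, ∑ j ∈ S, f i j)
      = ((n - 2).choose (n₁ - 2) : ℝ) * (∑ i, ∑ j, f i j) := by
    have key : ∀ S ∈ A, ∑ i ∈ S, ∑ j ∈ S, f i j
        = ∑ i, ∑ j, (if i ∈ S ∧ j ∈ S then f i j else 0) := by
      intro S hS
      have hsub : S ⊆ univ := subset_univ S
      rw [← Finset.sum_subset hsub]
      · refine Finset.sum_congr rfl fun i hi => ?_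
        rw [← Finset.sum_subset hsub]
        · refine Finset.sum_congr rfl fun j hj => by simp [hi, hj]
        · intro j _ hj; simp [hj]
      · intro i _ hi
        refine Finset.sum_eq_zero fun j _ => by simp [hi]
    rw [Finset.sum_congr rfl key, Finset.sum_comm]
    rw [Finset.mul_sum]
    refine Finset.sum_congr rfl fun i _ => ?_
    rw [Finset.sum_comm, Finset.mul_sum]
    refine Finset.sum_congr rfl fun j _ => ?_
    by_cases hij : i = j
    · subst hij
      simp [hf]
    · rw [← Finset.sum_filter]
      have := count_contain (univ : Finset (Fin n)) n₁ h1 i j (mem_univ i) (mem_univ j) hij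
      rw [Finset.sum_const, nsmul_eq_mul]
      congr 1
      rw [show ((A.filter fun S => i ∈ S ∧ j ∈ S).card : ℝ)
          = (((univ : Finset (Fin n)).powersetCard n₁).filter
              (fun S => i ∈ S ∧ j ∈ S)).card from rfl, this]
      simp [card_univ]
  -- Step 3: population variance in terms of pairwise differences
  have step3 : ∑ i, (Y1 i - Ybar1) ^ 2 = (∑ i, ∑ j, f i j) / (2 * (n : ℝ)) := by
    have := sum_sq_dev_pair (univ : Finset (Fin n)) Y1 n (by simp) hnR
    simpa [Ybar1, hf] using this
  -- put it together
  rw [Finset.sum_congr rfl step1, ← Finset.sum_div, step2]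
  simp only [S1sq, step3]
  rw [hAcard]
  -- now pure arithmetic with the choose identity
  have hkey : ((n : ℝ)) * ((n : ℝ) - 1) * ((n - 2).choose (n₁ - 2) : ℝ)
      = (n₁ : ℝ) * ((n₁ : ℝ) - 1) * (n.choose n₁ : ℝ) := by
    have := choose_identity n n₁ h1 h2
    have hcast : ((n * (n - 1) * (n - 2).choose (n₁ - 2) : ℕ) : ℝ)
        = ((n₁ * (n₁ - 1) * n.choose n₁ : ℕ) : ℝ) := by exact_mod_cast this
    push_cast at hcast
    have hn1' : ((n₁ - 1 : ℕ) : ℝ) = (n₁ : ℝ) - 1 := by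
      have : 1 ≤ n₁ := by omega
      push_cast [this]; ring
    have hnn' : ((n - 1 : ℕ) : ℝ) = (n : ℝ) - 1 := by
      have : 1 ≤ n := by omega
      push_cast [this]; ring
    rw [hn1', hnn'] at hcast
    linarith [hcast]
  have hC0 : ((n.choose n₁ : ℕ) : ℝ) ≠ 0 := by
    exact_mod_cast (Nat.choose_pos h2).ne'
  set Q := ∑ i, ∑ j, f i j with hQ
  field_simp
  linear_combination Q * hkey
end

section
/- Suppose U_1,...,U_n are independent random k-vectors with E[U_i] = B Z_i (Z_i fixed, Σ Z_i Z_i' invertible), X_i = U_i − B Z_i, and potential outcomes are linear: Y_i = U_i'θ_i + ξ_i almost surely with θ_i, ξ_i deterministic. If Σ_i E[X_i X_i'] is invertible, then the causal estimand θ^causal = (Σ_i E[X_i X_i'])^{-1} Σ_i E[X_i Y_i] equals the weighted average (Σ_i E[X_i X_i'])^{-1} Σ_i E[X_i X_i'] θ_i of the unit-level causal coefficients θ_i. -/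
open MeasureTheory ProbabilityTheory

/-- Under random assignment with mean linear in attributes and linear potential
outcomes, the causal regression estimand is a matrix-weighted average of the
unit-level causal coefficients `θ_i`, with weights `E[X_i X_i']`. -/
theorem stmt15 {Ω : Type*} [MeasurableSpace Ω] (μ : Measure Ω)
    [IsProbabilityMeasure μ] (n k l : ℕ)
    (U : Fin n → Ω → Fin k → ℝ) (Z : Fin n → Fin l → ℝ)
    (B : Matrix (Fin k) (Fin l) ℝ) (θi : Fin n → Fin k → ℝ) (ξ : Fin n → ℝ)
    (Y : Fin n → Ω → ℝ)
    (hUmeas : ∀ i, Measurable (U i))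
    (hindep : iIndepFun U μ)
    (hint1 : ∀ i a, Integrable (fun ω => U i ω a) μ)
    (hint2 : ∀ i a b, Integrable (fun ω => U i ω a * U i ω b) μ)
    (hmean : ∀ i a, ∫ ω, U i ω a ∂μ = B.mulVec (Z i) a)
    (hZ : IsUnit (∑ i, Matrix.vecMulVec (Z i) (Z i)))
    (hY : ∀ i, ∀ᵐ ω ∂μ, Y i ω = (∑ a, U i ω a * θi i a) + ξ i) :
    let X : Fin n → Ω → Fin k → ℝ :=
      fun i ω a => U i ω a - B.mulVec (Z i) a
    let EXX : Fin n → Matrix (Fin k) (Fin k) ℝ :=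
      fun i => Matrix.of fun a b => ∫ ω, X i ω a * X i ω b ∂μ
    IsUnit (∑ i, EXX i) →
    (∑ i, EXX i)⁻¹.mulVec (fun a => ∑ i, ∫ ω, X i ω a * Y i ω ∂μ)
      = (∑ i, EXX i)⁻¹.mulVec (∑ i, (EXX i).mulVec (θi i)) := by

  intro X EXX hunit
  have hv : (fun a => ∑ i, ∫ ω, X i ω a * Y i ω ∂μ)
      = ∑ i, (EXX i).mulVec (θi i) := by
    funext a
    rw [Finset.sum_apply]
    refine Finset.sum_congr rfl fun i _ => ?_
    set c : Fin k → ℝ := B.mulVec (Z i) with hc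
    have hiU : ∀ b, Integrable (fun ω => U i ω b) μ := hint1 i
    have hiUU : ∀ p q, Integrable (fun ω => U i ω p * U i ω q) μ := hint2 i
    have hEXX : ∀ p q : Fin k, EXX i p q = (∫ ω, U i ω p * U i ω q ∂μ) - c p * c q := by
      intro p q
      have h : (fun ω => X i ω p * X i ω q)
          = fun ω => (U i ω p * U i ω q - c q * U i ω p) - (c p * U i ω q - c p * c q) := by
        funext ω; simp only [X]; ring
      have i1 : Integrable (fun ω => U i ω p * U i ω q - c q * U i ω p) μ := by
        exact (hiUU p q).sub ((hiU p).const_mul (c q))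
      have i2 : Integrable (fun ω => c p * U i ω q - c p * c q) μ := by
        exact ((hiU q).const_mul (c p)).sub (integrable_const _)
      simp only [EXX, Matrix.of_apply]
      rw [h, integral_sub i1 i2,
        integral_sub (hiUU p q) (by exact (hiU p).const_mul (c q) :
          Integrable (fun ω => c q * U i ω p) μ),
        integral_sub (by exact (hiU q).const_mul (c p) :
          Integrable (fun ω => c p * U i ω q) μ) (integrable_const _),
        integral_const_mul, integral_const_mul, integral_const, hmean, hmean]
      simp [c]
      ring
    have hg : ∀ b : Fin k, Integrable
        (fun ω => θi i b * (U i ω a * U i ω b) - (c a * θi i b) * U i ω b) μ :=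
      fun b => ((hiUU a b).const_mul _).sub ((hiU b).const_mul _)
    have h1 : ∫ ω, X i ω a * Y i ω ∂μ
        = ∫ ω, (∑ b, (θi i b * (U i ω a * U i ω b) - (c a * θi i b) * U i ω b))
            + (ξ i * U i ω a - ξ i * c a) ∂μ := by
      refine integral_congr_ae ?_
      filter_upwards [hY i] with ω hω
      simp only [X]
      rw [hω, mul_add, Finset.mul_sum]
      congr 1
      · exact Finset.sum_congr rfl fun b _ => by ring
      · ring
    have i3 : Integrable (fun ω => ξ i * U i ω a - ξ i * c a) μ := by
      exact ((hiU a).const_mul _).sub (integrable_const _)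
    rw [h1, integral_add (integrable_finset_sum _ (fun b _ => hg b)) i3,
      integral_finset_sum _ (fun b _ => hg b),
      integral_sub (by exact (hiU a).const_mul _ :
        Integrable (fun ω => ξ i * U i ω a) μ) (integrable_const _),
      integral_const_mul, integral_const, hmean]
    have hconst : (ξ i * B.mulVec (Z i) a - μ.real Set.univ • (ξ i * c a)) = 0 := by simp [c]
    rw [hconst, add_zero]
    have hmv : (EXX i).mulVec (θi i) a = ∑ b, EXX i a b * θi i b := by
      simp [Matrix.mulVec, dotProduct]
    rw [hmv]
    refine Finset.sum_congr rfl fun b _ => ?_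
    rw [integral_sub (by exact (hiUU a b).const_mul _ :
        Integrable (fun ω => θi i b * (U i ω a * U i ω b)) μ)
      (by exact (hiU b).const_mul _ : Integrable (fun ω => c a * θi i b * U i ω b) μ),
      integral_const_mul, integral_const_mul, hmean, hEXX]
    simp only [c]
    ring


  rw [hv]
end

section
/- Under complete randomization with n_1 treated units, the conditional expectation of the difference-in-means estimator given the sampling indicators R (with R having N_1 ≥ 1 treated and N_0 ≥ 1 control sampled units) equals the sample average treatment effect (1/N) Σ_i R_i (Y_i(1) − Y_i(0)), when assignment X is uniform over assignments with n_1 treated among all n units and independent considerations make each sampled unit equally likely to be treated. -/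
open Finset


variable {α : Type*} [DecidableEq α]

lemma count_mem_powersetCard (s : Finset α) (k : ℕ) (hk : 1 ≤ k) (i : α) (hi : i ∈ s) :
    ((s.powersetCard k).filter (fun T => i ∈ T)).card
      = (s.card - 1).choose (k - 1) := by
  rw [← Finset.card_erase_of_mem hi, ← Finset.card_powersetCard]
  apply Finset.card_bij (fun T _ => T.erase i)
  · intro T hT
    simp only [mem_filter, mem_powersetCard] at hT ⊢
    exact ⟨Finset.erase_subset_erase i hT.1.1, by rw [Finset.card_erase_of_mem hT.2, hT.1.2]⟩
  · intro T hT T' hT' h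
    simp only [mem_filter, mem_powersetCard] at hT hT'
    rw [← Finset.insert_erase hT.2, ← Finset.insert_erase hT'.2, h]
  · intro U hU
    simp only [mem_powersetCard] at hU
    refine ⟨insert i U, ?_, ?_⟩
    · simp only [mem_filter, mem_powersetCard]
      have hiU : i ∉ U := fun h => (Finset.mem_erase.1 (hU.1 h)).1 rfl
      refine ⟨⟨?_, ?_⟩, Finset.mem_insert_self i U⟩
      · exact Finset.insert_subset hi (hU.1.trans (Finset.erase_subset i s))
      · rw [Finset.card_insert_of_notMem hiU, hU.2]; omega
    · rw [Finset.erase_insert (fun h => (Finset.mem_erase.1 (hU.1 h)).1 rfl)]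

lemma sum_sum_powersetCard (s : Finset α) (k : ℕ) (hk : 1 ≤ k) (f : α → ℝ) :
    ∑ T ∈ s.powersetCard k, ∑ i ∈ T, f i
      = ((s.card - 1).choose (k - 1) : ℝ) * ∑ i ∈ s, f i := by
  have h1 : ∀ T ∈ s.powersetCard k, ∑ i ∈ T, f i = ∑ i ∈ s, if i ∈ T then f i else 0 := by
    intro T hT
    rw [Finset.sum_ite_mem, Finset.inter_eq_right.2 (Finset.mem_powersetCard.1 hT).1]
  rw [Finset.sum_congr rfl h1, Finset.sum_comm]
  rw [Finset.mul_sum]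
  apply Finset.sum_congr rfl
  intro i hi
  rw [← Finset.sum_filter, Finset.sum_const, count_mem_powersetCard s k hk i hi]
  simp [mul_comm]


/-- Conditional on the sampling indicators (and on the numbers `N₁, N₀` of
treated and control sampled units), the expectation of the difference-in-means
estimator over the completely randomized assignment equals the sample average
treatment effect. -/
theorem stmt16 (n n₁ : ℕ) (h1 : 1 ≤ n₁) (h2 : n₁ ≤ n - 1)
    (Y1 Y0 : Fin n → ℝ) (Rs : Finset (Fin n)) (N₁ : ℕ)
    (hN₁ : 1 ≤ N₁) (hN₀ : 1 ≤ Rs.card - N₁) (hle : N₁ ≤ Rs.card) :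
    let N := Rs.card
    let N₀ := N - N₁
    let A := ((univ : Finset (Fin n)).powersetCard n₁).filter
      (fun S => (Rs ∩ S).card = N₁)
    let θhat : Finset (Fin n) → ℝ := fun S =>
      (∑ i ∈ Rs ∩ S, Y1 i) / (N₁ : ℝ) - (∑ i ∈ Rs \ S, Y0 i) / (N₀ : ℝ)
    A.Nonempty →
    (∑ S ∈ A, θhat S) / (A.card : ℝ)
      = (∑ i ∈ Rs, (Y1 i - Y0 i)) / (N : ℝ) := by
  intro N N₀ A θhat hA
  -- N₁ ≤ n₁
  obtain ⟨S₀, hS₀⟩ := hA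
  simp only [A, mem_filter, mem_powersetCard] at hS₀
  have hN₁n₁ : N₁ ≤ n₁ := by
    rw [← hS₀.2, ← hS₀.1.2]
    exact Finset.card_le_card Finset.inter_subset_right
  -- the function g on treated subsets of Rs
  set g : Finset (Fin n) → ℝ := fun T =>
    (∑ i ∈ T, Y1 i) / (N₁ : ℝ) - (∑ i ∈ Rs \ T, Y0 i) / (N₀ : ℝ) with hg
  -- product decomposition
  set P := (Rs.powersetCard N₁) ×ˢ ((univ \ Rs).powersetCard (n₁ - N₁)) with hP
  have key : ∀ (F : Finset (Fin n) → ℝ),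
      ∑ S ∈ A, F (Rs ∩ S) = ∑ p ∈ P, F p.1 := by
    intro F
    apply Finset.sum_nbij' (fun S => (Rs ∩ S, S \ Rs)) (fun p => p.1 ∪ p.2)
    · intro S hS
      simp only [A, mem_filter, mem_powersetCard] at hS
      simp only [hP, Finset.mem_product, mem_powersetCard]
      refine ⟨⟨Finset.inter_subset_left, hS.2⟩, ?_, ?_⟩
      · exact Finset.sdiff_subset_sdiff (Finset.subset_univ S) (le_refl Rs)
      · have := Finset.card_inter_add_card_sdiff S Rs
        rw [Finset.inter_comm] at this
        omega
    · intro p hp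
      simp only [hP, Finset.mem_product, mem_powersetCard] at hp
      simp only [A, mem_filter, mem_powersetCard]
      have hdisj : Disjoint p.1 p.2 := by
        apply Finset.disjoint_left.2
        intro a ha1 ha2
        exact (Finset.mem_sdiff.1 (hp.2.1 ha2)).2 (hp.1.1 ha1)
      have hinter : Rs ∩ (p.1 ∪ p.2) = p.1 := by
        rw [Finset.inter_union_distrib_left,
          Finset.inter_eq_right.2 hp.1.1]
        have : Rs ∩ p.2 = ∅ := by
          apply Finset.eq_empty_of_forall_notMem
          intro a ha
          have := hp.2.1 (Finset.mem_inter.1 ha).2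
          exact (Finset.mem_sdiff.1 this).2 (Finset.mem_inter.1 ha).1
        rw [this, Finset.union_empty]
      refine ⟨⟨Finset.subset_univ _, ?_⟩, by rw [hinter, hp.1.2]⟩
      rw [Finset.card_union_of_disjoint hdisj, hp.1.2, hp.2.2]
      omega
    · intro S hS
      simp only [A, mem_filter, mem_powersetCard] at hS
      simp only [Prod.fst, Prod.snd]
      rw [Finset.inter_comm]
      exact sup_inf_sdiff S Rs
    · intro p hp
      simp only [hP, Finset.mem_product, mem_powersetCard] at hp
      have hinter : Rs ∩ (p.1 ∪ p.2) = p.1 := by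
        rw [Finset.inter_union_distrib_left,
          Finset.inter_eq_right.2 hp.1.1]
        have : Rs ∩ p.2 = ∅ := by
          apply Finset.eq_empty_of_forall_notMem
          intro a ha
          have := hp.2.1 (Finset.mem_inter.1 ha).2
          exact (Finset.mem_sdiff.1 this).2 (Finset.mem_inter.1 ha).1
        rw [this, Finset.union_empty]
      have hsd : (p.1 ∪ p.2) \ Rs = p.2 := by
        rw [Finset.union_sdiff_distrib]
        have h1 : p.1 \ Rs = ∅ := Finset.sdiff_eq_empty_iff_subset.2 hp.1.1
        have h2 : p.2 \ Rs = p.2 := by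
          apply Finset.sdiff_eq_self_iff_disjoint.2
          apply Finset.disjoint_left.2
          intro a ha hR
          exact (Finset.mem_sdiff.1 (hp.2.1 ha)).2 hR
        rw [h1, h2, Finset.empty_union]
      rw [hinter, hsd]
    · intro S hS; rfl
  -- θhat S = g (Rs ∩ S)
  have hθg : ∀ S ∈ A, θhat S = g (Rs ∩ S) := by
    intro S hS
    simp only [θhat, g, Finset.sdiff_inter_self_left]
  -- reduce sums
  set M := ((univ \ Rs : Finset (Fin n)).powersetCard (n₁ - N₁)).card with hM
  have hsum : ∑ S ∈ A, θhat S = (M : ℝ) * ∑ T ∈ Rs.powersetCard N₁, g T := by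
    rw [Finset.sum_congr rfl hθg, key g, hP, Finset.sum_product]
    rw [Finset.sum_comm]
    simp [Finset.sum_const, hM, mul_comm, Finset.mul_sum]
  have hcard : A.card = (Rs.powersetCard N₁).card * M := by
    rw [← Finset.card_product]
    apply Finset.card_nbij' (fun S => (Rs ∩ S, S \ Rs)) (fun p => p.1 ∪ p.2)
    · intro S hS
      simp only [Finset.mem_coe, A, mem_filter, mem_powersetCard] at hS
      simp only [Finset.mem_coe, Finset.mem_product, mem_powersetCard]
      refine ⟨⟨Finset.inter_subset_left, hS.2⟩, ?_, ?_⟩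
      · exact Finset.sdiff_subset_sdiff (Finset.subset_univ S) (le_refl Rs)
      · have := Finset.card_inter_add_card_sdiff S Rs
        rw [Finset.inter_comm] at this
        omega
    · intro p hp
      simp only [Finset.mem_coe, Finset.mem_product, mem_powersetCard] at hp
      simp only [Finset.mem_coe, A, mem_filter, mem_powersetCard]
      have hdisj : Disjoint p.1 p.2 := by
        apply Finset.disjoint_left.2
        intro a ha1 ha2
        exact (Finset.mem_sdiff.1 (hp.2.1 ha2)).2 (hp.1.1 ha1)
      have hinter : Rs ∩ (p.1 ∪ p.2) = p.1 := by
        rw [Finset.inter_union_distrib_left,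
          Finset.inter_eq_right.2 hp.1.1]
        have : Rs ∩ p.2 = ∅ := by
          apply Finset.eq_empty_of_forall_notMem
          intro a ha
          have := hp.2.1 (Finset.mem_inter.1 ha).2
          exact (Finset.mem_sdiff.1 this).2 (Finset.mem_inter.1 ha).1
        rw [this, Finset.union_empty]
      refine ⟨⟨Finset.subset_univ _, ?_⟩, by rw [hinter, hp.1.2]⟩
      rw [Finset.card_union_of_disjoint hdisj, hp.1.2, hp.2.2]
      omega
    · intro S hS
      simp only [Finset.mem_coe, A, mem_filter, mem_powersetCard] at hS
      simp only [Prod.fst, Prod.snd]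
      rw [Finset.inter_comm]
      exact sup_inf_sdiff S Rs
    · intro p hp
      simp only [Finset.mem_coe, Finset.mem_product, mem_powersetCard] at hp
      have hinter : Rs ∩ (p.1 ∪ p.2) = p.1 := by
        rw [Finset.inter_union_distrib_left,
          Finset.inter_eq_right.2 hp.1.1]
        have : Rs ∩ p.2 = ∅ := by
          apply Finset.eq_empty_of_forall_notMem
          intro a ha
          have := hp.2.1 (Finset.mem_inter.1 ha).2
          exact (Finset.mem_sdiff.1 this).2 (Finset.mem_inter.1 ha).1
        rw [this, Finset.union_empty]
      have hsd : (p.1 ∪ p.2) \ Rs = p.2 := by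
        rw [Finset.union_sdiff_distrib]
        have h1 : p.1 \ Rs = ∅ := Finset.sdiff_eq_empty_iff_subset.2 hp.1.1
        have h2 : p.2 \ Rs = p.2 := by
          apply Finset.sdiff_eq_self_iff_disjoint.2
          apply Finset.disjoint_left.2
          intro a ha hR
          exact (Finset.mem_sdiff.1 (hp.2.1 ha)).2 hR
        rw [h1, h2, Finset.empty_union]
      dsimp only; rw [hinter, hsd]
  -- nonzero facts
  have hAne : A.card ≠ 0 := Finset.card_ne_zero_of_mem (by
    simp only [A, mem_filter, mem_powersetCard]; exact hS₀)
  have hMne : M ≠ 0 := by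
    intro h; rw [hcard, h, Nat.mul_zero] at hAne; exact hAne rfl
  have hCne : (Rs.powersetCard N₁).card ≠ 0 := by
    intro h; rw [hcard, h, Nat.zero_mul] at hAne; exact hAne rfl
  -- the core computation over T ⊆ Rs
  have hsum1 : ∑ T ∈ Rs.powersetCard N₁, ∑ i ∈ T, Y1 i
      = ((N - 1).choose (N₁ - 1) : ℝ) * ∑ i ∈ Rs, Y1 i :=
    sum_sum_powersetCard Rs N₁ hN₁ Y1
  have hsum0 : ∑ T ∈ Rs.powersetCard N₁, ∑ i ∈ Rs \ T, Y0 i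
      = ((Rs.powersetCard N₁).card : ℝ) * (∑ i ∈ Rs, Y0 i)
        - ((N - 1).choose (N₁ - 1) : ℝ) * ∑ i ∈ Rs, Y0 i := by
    have : ∀ T ∈ Rs.powersetCard N₁, ∑ i ∈ Rs \ T, Y0 i
        = (∑ i ∈ Rs, Y0 i) - ∑ i ∈ T, Y0 i := by
      intro T hT
      rw [Finset.sum_sdiff_eq_sub (Finset.mem_powersetCard.1 hT).1]
    rw [Finset.sum_congr rfl this, Finset.sum_sub_distrib, Finset.sum_const,
      sum_sum_powersetCard Rs N₁ hN₁ Y0, nsmul_eq_mul]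
  -- binomial identities
  have hcardC : (Rs.powersetCard N₁).card = N.choose N₁ := by
    rw [Finset.card_powersetCard]
  have hNpos : 1 ≤ N := le_trans hN₁ hle
  have hbin : N * (N - 1).choose (N₁ - 1) = N.choose N₁ * N₁ := by
    have h := Nat.add_one_mul_choose_eq (N - 1) (N₁ - 1)
    have e1 : N - 1 + 1 = N := by omega
    have e2 : N₁ - 1 + 1 = N₁ := by omega
    rw [e1, e2] at h
    exact h
  -- pass to the reals
  set S1 := ∑ i ∈ Rs, Y1 i with hS1
  set S0 := ∑ i ∈ Rs, Y0 i with hS0def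
  set B : ℝ := ((N - 1).choose (N₁ - 1) : ℝ) with hB
  set C : ℝ := (N.choose N₁ : ℝ) with hC
  have hbinR : (N : ℝ) * B = C * N₁ := by
    rw [hB, hC]; exact_mod_cast hbin
  have hN0R : (N₀ : ℝ) = (N : ℝ) - (N₁ : ℝ) := by
    have : N₀ = N - N₁ := rfl
    rw [this, Nat.cast_sub hle]
  have hN₁ne : (N₁ : ℝ) ≠ 0 := by positivity
  have hN₀ne : (N₀ : ℝ) ≠ 0 := by
    have : 1 ≤ N₀ := hN₀
    positivity
  have hNne : (N : ℝ) ≠ 0 := by positivity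
  have hMneR : (M : ℝ) ≠ 0 := Nat.cast_ne_zero.2 hMne
  have hCneR : C ≠ 0 := by
    rw [hC]
    exact Nat.cast_ne_zero.2 (by rw [← hcardC]; exact hCne)
  have hgs : ∑ T ∈ Rs.powersetCard N₁, g T
      = (B * S1) / N₁ - (C * S0 - B * S0) / N₀ := by
    rw [hg]
    rw [Finset.sum_sub_distrib, ← Finset.sum_div, ← Finset.sum_div, hsum1, hsum0,
      hcardC]
  have hAcardR : (A.card : ℝ) = C * M := by
    rw [hcard, hcardC, hC]; push_cast; ring
  rw [hsum, hgs, hAcardR, Finset.sum_sub_distrib, ← hS1, ← hS0def]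
  have hB' : B = C * N₁ / N := by rw [eq_div_iff hNne]; linarith [hbinR]
  have hNN : (N:ℝ) - N₁ ≠ 0 := hN0R ▸ hN₀ne
  rw [hB', hN0R]
  field_simp
end
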